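/- For γ1 ∈ (0, π/4], set x3^(3) = −tan²γ1 and define g(x3) = (1 − x3) cos²γ1 / 2 for −1 ≤ x3 ≤ x3^(3); g(x3) = −(1 − x3)²(1 + x3) sin²(2γ1) / (−1 + x3(2 + 7x3) + (1 − x3)² cos(4γ1)) for x3^(3) < x3 < 0; and g(x3) = (1 + x3)/2 for 0 ≤ x3 ≤ 1. Then for each fixed x3 ∈ (−1, 0), g(x3) is monotonically decreasing as a function of γ1 on (0, π/4], and for x3 ∈ [0,1], g(x3) is independent of γ1. -/
import Mathlib


open Real

noncomputable def Efun (x v : ℝ) : ℝ :=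
  (1-x)^2*(1+x)*(v*(1-v)) / (2*((1-x)^2*(v*(1-v)) - x^2))

lemma fpos (x v : ℝ) (hx1 : -1 < x) (hx0 : x < 0) (hv : 1/2 ≤ v)
    (hb : (1-x)*v < 1) : 0 < (1-x)^2*(v*(1-v)) + x := by
  have h2 : 0 < (1-x)*v + x := by
    nlinarith [mul_nonneg (by linarith : (0:ℝ) ≤ 1-x) (by linarith : 0 ≤ v - 1/2)]
  have h1 : 0 < 1 - (1-x)*v := by linarith
  nlinarith [mul_pos h1 h2]

lemma Dpos (x v : ℝ) (hx1 : -1 < x) (hx0 : x < 0) (hv : 1/2 ≤ v)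
    (hb : (1-x)*v < 1) : 0 < (1-x)^2*(v*(1-v)) - x^2 := by
  have hf := fpos x v hx1 hx0 hv hb
  have h2 : 0 < (-x)*(1+x) := mul_pos (by linarith) (by linarith)
  nlinarith

lemma E_lt_half (x v : ℝ) (hx1 : -1 < x) (hx0 : x < 0) (hv : 1/2 ≤ v)
    (hb : (1-x)*v < 1) : Efun x v < 1/2 := by
  have hf := fpos x v hx1 hx0 hv hb
  have hD := Dpos x v hx1 hx0 hv hb
  rw [Efun, div_lt_iff₀ (by linarith)]
  have key := mul_pos (neg_pos.mpr hx0) hf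
  nlinarith

lemma E_mono (x v1 v2 : ℝ) (hx1 : -1 < x) (hx0 : x < 0) (h2 : 1/2 ≤ v2)
    (hv : v2 < v1) (hb : (1-x)*v1 < 1) : Efun x v2 < Efun x v1 := by
  have h1 : 1/2 ≤ v1 := le_of_lt (lt_of_le_of_lt h2 hv)
  have hb2 : (1-x)*v2 < 1 := by nlinarith
  have hD1 := Dpos x v1 hx1 hx0 h1 hb
  have hD2 := Dpos x v2 hx1 hx0 h2 hb2
  rw [Efun, Efun, div_lt_div_iff₀ (by linarith) (by linarith)]
  have hupos : 0 < v2*(1-v2) - v1*(1-v1) := by nlinarith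
  have hx2 : 0 < x^2 := by nlinarith
  have h1mx : 0 < (1-x)^2 := pow_pos (by linarith) 2
  have h1px : 0 < 1 + x := by linarith
  have key := mul_pos (mul_pos (mul_pos hx2 h1mx) h1px) hupos
  nlinarith

lemma branch2_eq (x γ : ℝ) :
    -((1 - x)^2 * (1 + x) * (Real.sin (2*γ))^2) /
      (-1 + x * (2 + 7*x) + (1 - x)^2 * Real.cos (4*γ)) = Efun x ((Real.cos γ)^2) := by
  have hs : Real.sin γ ^ 2 = 1 - Real.cos γ ^ 2 := Real.sin_sq γ
  have h2 : Real.sin (2*γ) = 2 * Real.sin γ * Real.cos γ := Real.sin_two_mul γ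
  have h4 : Real.cos (4*γ) = 2 * Real.cos (2*γ) ^ 2 - 1 := by
    rw [show (4:ℝ)*γ = 2*(2*γ) by ring, Real.cos_two_mul]
  have h2c : Real.cos (2*γ) ^ 2 = 1 - Real.sin (2*γ)^2 := by
    have := Real.sin_sq_add_cos_sq (2*γ); linarith
  have hnum : -((1 - x)^2 * (1 + x) * (Real.sin (2*γ))^2)
      = (-4) * ((1-x)^2*(1+x)*((Real.cos γ)^2*(1-(Real.cos γ)^2))) := by
    rw [h2]
    linear_combination (-4*(1-x)^2*(1+x)*(Real.cos γ)^2) * hs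
  have hden : -1 + x * (2 + 7*x) + (1 - x)^2 * Real.cos (4*γ)
      = (-4) * (2*((1-x)^2*((Real.cos γ)^2*(1-(Real.cos γ)^2)) - x^2)) := by
    rw [h4, h2c, h2]
    linear_combination (-8*(1-x)^2*(Real.cos γ)^2) * hs
  rw [hnum, hden, Efun, mul_div_mul_left _ _ (by norm_num : (-4:ℝ) ≠ 0)]

theorem stmt10 :
    let g : ℝ → ℝ → ℝ := fun γ1 x =>
      if x ≤ -(Real.tan γ1)^2 then (1 - x) * (Real.cos γ1)^2 / 2
      else if x < 0 then
        -((1 - x)^2 * (1 + x) * (Real.sin (2*γ1))^2) /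
          (-1 + x * (2 + 7*x) + (1 - x)^2 * Real.cos (4*γ1))
      else (1 + x) / 2
    (∀ x ∈ Set.Ioo (-1:ℝ) 0, StrictAntiOn (fun γ1 => g γ1 x) (Set.Ioc 0 (π/4))) ∧
      (∀ x ∈ Set.Icc (0:ℝ) 1, ∀ γ1 ∈ Set.Ioc (0:ℝ) (π/4), ∀ γ1' ∈ Set.Ioc (0:ℝ) (π/4),
        g γ1 x = g γ1' x) := by
  intro g
  have hg : ∀ γ y : ℝ, g γ y = if y ≤ -(Real.tan γ)^2 then (1 - y) * (Real.cos γ)^2 / 2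
      else if y < 0 then
        -((1 - y)^2 * (1 + y) * (Real.sin (2*γ))^2) /
          (-1 + y * (2 + 7*y) + (1 - y)^2 * Real.cos (4*γ))
      else (1 + y) / 2 := fun _ _ => rfl
  have hπ := Real.pi_pos
  constructor
  · rintro x ⟨hx1, hx0⟩ a ⟨ha0, ha4⟩ b ⟨hb0, hb4⟩ hab
    simp only
    have facts : ∀ γ : ℝ, 0 < γ → γ ≤ π/4 →
        0 < Real.cos γ ∧ 1/2 ≤ (Real.cos γ)^2 ∧ (Real.cos γ)^2 < 1 := by
      intro γ h0 h4
      have hc : 0 < Real.cos γ :=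
        Real.cos_pos_of_mem_Ioo ⟨by linarith, by linarith⟩
      have hs : 0 < Real.sin γ := Real.sin_pos_of_pos_of_lt_pi h0 (by linarith)
      have hv1 : (Real.cos γ)^2 < 1 := by nlinarith [Real.sin_sq_add_cos_sq γ]
      have hcsq := Real.cos_sq γ
      have h2 : 0 ≤ Real.cos (2*γ) :=
        Real.cos_nonneg_of_mem_Icc ⟨by linarith, by linarith⟩
      exact ⟨hc, by linarith, hv1⟩
    obtain ⟨hca, hva2, hva1⟩ := facts a ha0 ha4
    obtain ⟨hcb, hvb2, hvb1⟩ := facts b hb0 hb4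
    have hvab : (Real.cos b)^2 < (Real.cos a)^2 := by
      have := Real.cos_lt_cos_of_nonneg_of_le_pi (le_of_lt ha0) (by linarith) hab
      nlinarith
    have cond : ∀ γ : ℝ, 0 < Real.cos γ →
        ((x ≤ -(Real.tan γ)^2) ↔ 1 ≤ (1-x) * (Real.cos γ)^2) := by
      intro γ hc
      rw [Real.tan_eq_sin_div_cos, div_pow, ← neg_div, le_div_iff₀ (pow_pos hc 2)]
      have := Real.sin_sq_add_cos_sq γ
      constructor <;> intro <;> nlinarith
    by_cases hcb1 : 1 ≤ (1-x) * (Real.cos b)^2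
    · -- both in branch 1
      have hca1 : 1 ≤ (1-x) * (Real.cos a)^2 := by nlinarith
      rw [hg, hg, if_pos ((cond a hca).mpr hca1), if_pos ((cond b hcb).mpr hcb1)]
      nlinarith
    · have hbb : (1-x) * (Real.cos b)^2 < 1 := lt_of_not_ge hcb1
      rw [hg b, if_neg (fun h => hcb1 ((cond b hcb).mp h)), if_pos hx0, branch2_eq]
      by_cases hca1 : 1 ≤ (1-x) * (Real.cos a)^2
      · rw [hg, if_pos ((cond a hca).mpr hca1)]
        have := E_lt_half x ((Real.cos b)^2) hx1 hx0 hvb2 hbb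
        linarith
      · rw [hg, if_neg (fun h => hca1 ((cond a hca).mp h)), if_pos hx0, branch2_eq]
        exact E_mono x ((Real.cos a)^2) ((Real.cos b)^2) hx1 hx0 hvb2 hvab
          (lt_of_not_ge hca1)
  · rintro x ⟨hx0, _⟩ γ1 ⟨hγ0, hγ4⟩ γ1' ⟨hγ0', hγ4'⟩
    have key : ∀ γ : ℝ, 0 < γ → γ ≤ π/4 → g γ x = (1+x)/2 := by
      intro γ h0 h4
      have ht : 0 < Real.tan γ :=
        Real.tan_pos_of_pos_of_lt_pi_div_two h0 (by linarith)
      rw [hg, if_neg (by push_neg; nlinarith [mul_pos ht ht]),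
        if_neg (not_lt.mpr hx0)]
    rw [key γ1 hγ0 hγ4, key γ1' hγ0' hγ4']
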